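/- For X(u,v) = (−uv f₁ + 2 f̄₁ + (u+v)e₃)/(u−v), the mixed second derivative satisfies ∂²ᵤᵥ X = −2X/(u−v)² for all u ≠ v. -/

import Mathlib

open Matrix

noncomputable def f1 : Fin 3 → ℂ := (Real.sqrt 2 : ℂ)⁻¹ • ![1, -Complex.I, 0]
noncomputable def fbar1 : Fin 3 → ℂ := (Real.sqrt 2 : ℂ)⁻¹ • ![1, Complex.I, 0]
def e3 : Fin 3 → ℂ := ![0, 0, 1]

/-- Standard doubly ruled parametrization of the complex unit sphere. -/
noncomputable def Xsph (u v : ℂ) : Fin 3 → ℂ :=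
  (u - v)⁻¹ • ((-(u * v)) • f1 + (2 : ℂ) • fbar1 + (u + v) • e3)

lemma Xsph_eq (s t : ℂ) :
    Xsph s t = ((-(s*t))/(s-t)) • f1 + ((2:ℂ)/(s-t)) • fbar1 + ((s+t)/(s-t)) • e3 := by
  unfold Xsph
  simp only [smul_add, smul_smul, div_eq_mul_inv]
  ring_nf

lemma inner_hasDerivAt (s t : ℂ) (h : s ≠ t) :
    HasDerivAt (fun t => Xsph s t)
      (((s-t)^2)⁻¹ • ((-(s^2)) • f1 + (2:ℂ) • fbar1 + (2*s) • e3)) t := by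
  have hne : s - t ≠ 0 := sub_ne_zero.mpr h
  have hd : HasDerivAt (fun t : ℂ => s - t) (-1) t := by
    exact (hasDerivAt_id t).const_sub s
  have h1 : HasDerivAt (fun t : ℂ => -(s*t)) (-s) t := by
    exact (((hasDerivAt_id t).const_mul s).neg).congr_deriv (by simp)
  have h2 : HasDerivAt (fun t : ℂ => (2:ℂ)) 0 t := hasDerivAt_const t 2
  have h3 : HasDerivAt (fun t : ℂ => s + t) 1 t := by
    exact (hasDerivAt_id t).const_add s
  have H := (((h1.div hd hne).smul_const f1).add ((h2.div hd hne).smul_const fbar1)).add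
    ((h3.div hd hne).smul_const e3)
  have key : (fun t => Xsph s t) =
      fun t => ((-(s*t))/(s-t)) • f1 + ((2:ℂ)/(s-t)) • fbar1 + ((s+t)/(s-t)) • e3 := by
    funext t; exact Xsph_eq s t
  rw [key]
  refine H.congr_deriv ?_
  rw [smul_add, smul_add, smul_smul, smul_smul, smul_smul]
  match_scalars <;> field_simp <;> ring

/-- The mixed second derivative of the standard doubly ruled parametrization of the
unit sphere satisfies `∂²ᵤᵥ X = −2X/(u−v)²`. -/
theorem sphere_mixed_derivative (u v : ℂ) (huv : u ≠ v) :
    deriv (fun s => deriv (fun t => Xsph s t) v) u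
      = (-2 / (u - v) ^ 2) • Xsph u v := by
  have heq : (fun s => deriv (fun t => Xsph s t) v) =ᶠ[nhds u]
      (fun s => ((s-v)^2)⁻¹ • ((-(s^2)) • f1 + (2:ℂ) • fbar1 + (2*s) • e3)) := by
    filter_upwards [isOpen_ne.mem_nhds (show u ∈ {x : ℂ | x ≠ v} from huv)] with s hs
    exact (inner_hasDerivAt s v hs).deriv
  rw [heq.deriv_eq]
  have hne : u - v ≠ 0 := sub_ne_zero.mpr huv
  -- derivative of scalar part
  have hsub : HasDerivAt (fun s : ℂ => s - v) 1 u := by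
    exact (hasDerivAt_id u).sub_const v
  have hsq : HasDerivAt (fun s : ℂ => (s - v)^2) (2*(u-v)) u := by
    have := hsub.pow 2
    exact this.congr_deriv (by norm_num [mul_comm])
  have hc : HasDerivAt (fun s : ℂ => ((s-v)^2)⁻¹) (-(2*(u-v)) / ((u-v)^2)^2) u :=
    hsq.inv (pow_ne_zero 2 hne)
  have hW : HasDerivAt (fun s : ℂ => (-(s^2)) • f1 + (2:ℂ) • fbar1 + (2*s) • e3)
      ((-(2*u)) • f1 + (0:ℂ) • fbar1 + (2:ℂ) • e3) u := by
    have w1 : HasDerivAt (fun s : ℂ => -(s^2)) (-(2*u)) u := by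
      exact (((hasDerivAt_id u).pow 2).neg).congr_deriv (by norm_num [mul_comm])
    have w2 : HasDerivAt (fun s : ℂ => (2:ℂ)) 0 u := hasDerivAt_const u 2
    have w3 : HasDerivAt (fun s : ℂ => 2*s) 2 u := by
      simpa using (hasDerivAt_id u).const_mul (2:ℂ)
    exact ((w1.smul_const f1).add (w2.smul_const fbar1)).add (w3.smul_const e3)
  have H : HasDerivAt (fun s : ℂ => ((s-v)^2)⁻¹ • ((-(s^2)) • f1 + (2:ℂ) • fbar1 + (2*s) • e3)) _ u := hc.smul hW
  rw [H.deriv]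
  rw [Xsph_eq]
  match_scalars <;> field_simp <;> ring
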